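/- arXiv:1612.04200 — 2 statements merged into one kernel-verified Lean document; each statement's English description precedes it below -/
import Mathlib

section
/- Among all probability densities ρ on [1, b) satisfying ∫₁^b ρ(x) ln x dx ≤ (1/2) ln b, the Newcomb–Benford density 1/(x ln b) has maximal differential entropy, with H = ln(ln b) + (1/2) ln b; moreover equality in the entropy bound forces ρ = 1/(x ln b) almost everywhere. -/
open MeasureTheory

/-- Explicit entropy integral for the Benford density. -/
lemma benford_entropy_integral (b : ℝ) (hb : 1 < b) :
    -∫ x in (1 : ℝ)..b, (1 / (x * Real.log b)) * Real.log (1 / (x * Real.log b)) =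
      Real.log (Real.log b) + (1 / 2) * Real.log b := by
  have hL : 0 < Real.log b := Real.log_pos hb
  set L := Real.log b with hLdef
  set G : ℝ → ℝ := fun x => -(((Real.log x) ^ 2 / 2 + Real.log L * Real.log x) / L) with hG
  have hderiv : ∀ x ∈ Set.uIcc (1 : ℝ) b,
      HasDerivAt G ((1 / (x * L)) * Real.log (1 / (x * L))) x := by
    intro x hx
    rw [Set.uIcc_of_le hb.le] at hx
    have hx0 : (0 : ℝ) < x := lt_of_lt_of_le one_pos hx.1
    have hx0' : x ≠ 0 := ne_of_gt hx0
    have hlog : HasDerivAt Real.log x⁻¹ x := Real.hasDerivAt_log hx0'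
    have h1 : HasDerivAt (fun y => (Real.log y) ^ 2 / 2 + Real.log L * Real.log y)
        ((2 * Real.log x * x⁻¹) / 2 + Real.log L * x⁻¹) x := by
      have := ((hlog.pow 2).div_const 2).add (hlog.const_mul (Real.log L))
      refine this.congr_deriv ?_
      norm_num
    have h2 := (h1.div_const L).neg
    refine h2.congr_deriv ?_
    have hxL : x * L ≠ 0 := by positivity
    rw [one_div, Real.log_inv, Real.log_mul hx0' (ne_of_gt hL)]
    field_simp
  have hne : ∀ x ∈ Set.uIcc (1:ℝ) b, x * L ≠ 0 := by
    intro x hx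
    rw [Set.uIcc_of_le hb.le] at hx
    have hx0 : (0 : ℝ) < x := lt_of_lt_of_le one_pos hx.1
    positivity
  have hcont : ContinuousOn (fun x : ℝ => 1 / (x * L)) (Set.uIcc (1:ℝ) b) :=
    continuousOn_const.div (continuousOn_id.mul continuousOn_const) hne
  have hint : IntervalIntegrable (fun x => (1 / (x * L)) * Real.log (1 / (x * L)))
      MeasureTheory.volume 1 b := by
    apply ContinuousOn.intervalIntegrable
    exact hcont.mul (hcont.log (by
      intro x hx
      have := hne x hx
      positivity))
  have := intervalIntegral.integral_eq_sub_of_hasDerivAt hderiv hint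
  rw [this]
  simp only [hG, Real.log_one]
  rw [← hLdef]
  field_simp
  ring

theorem benford_max_entropy (b : ℝ) (hb : 1 < b) (ρ : ℝ → ℝ)
    (hρ : ∀ x ∈ Set.Ico (1 : ℝ) b, 0 ≤ ρ x)
    (h1 : ∫ x in (1 : ℝ)..b, ρ x = 1)
    (hi1 : IntegrableOn (fun x => ρ x * Real.log (ρ x)) (Set.Ico 1 b))
    (hi2 : IntegrableOn (fun x => ρ x * Real.log x) (Set.Ico 1 b))
    (hconstraint : ∫ x in (1 : ℝ)..b, ρ x * Real.log x ≤ (1 / 2) * Real.log b) :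
    (-∫ x in (1 : ℝ)..b, ρ x * Real.log (ρ x) ≤
        Real.log (Real.log b) + (1 / 2) * Real.log b) ∧
    (-∫ x in (1 : ℝ)..b, (1 / (x * Real.log b)) * Real.log (1 / (x * Real.log b)) =
        Real.log (Real.log b) + (1 / 2) * Real.log b) ∧
    ((-∫ x in (1 : ℝ)..b, ρ x * Real.log (ρ x) =
        Real.log (Real.log b) + (1 / 2) * Real.log b) →
      ∀ᵐ x ∂(volume.restrict (Set.Ico (1 : ℝ) b)), ρ x = 1 / (x * Real.log b)) := by
  have hL : 0 < Real.log b := Real.log_pos hb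
  set L := Real.log b with hLdef
  set q : ℝ → ℝ := fun x => 1 / (x * L) with hq
  -- conversion of interval integrals to Ico set integrals
  have conv : ∀ f : ℝ → ℝ, ∫ x in (1:ℝ)..b, f x = ∫ x in Set.Ico (1:ℝ) b, f x := by
    intro f
    rw [intervalIntegral.integral_of_le hb.le, integral_Ioc_eq_integral_Ioo,
      ← integral_Ico_eq_integral_Ioo]
  -- ρ is integrable
  have hρint : IntegrableOn ρ (Set.Ico 1 b) := by
    by_contra h
    have h' : ¬ IntervalIntegrable ρ MeasureTheory.volume 1 b := by
      rw [intervalIntegrable_iff_integrableOn_Ioc_of_le hb.le]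
      intro h2
      exact h (((integrableOn_Ico_iff_integrableOn_Ioo' (by simp)).mpr
        ((integrableOn_Ioc_iff_integrableOn_Ioo' (by simp)).mp h2)))
    rw [intervalIntegral.integral_undef h'] at h1
    exact one_ne_zero h1.symm
  -- q is integrable
  have hq_int : IntegrableOn q (Set.Ico 1 b) := by
    apply (ContinuousOn.integrableOn_Icc ?_).mono_set Set.Ico_subset_Icc_self
    apply continuousOn_const.div (continuousOn_id.mul continuousOn_const)
    intro x hx
    have hx0 : (0 : ℝ) < x := lt_of_lt_of_le one_pos hx.1
    exact (mul_pos hx0 hL).ne'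
  -- basic facts
  have hρ1 : ∫ x in Set.Ico (1:ℝ) b, ρ x = 1 := by rw [← conv]; exact h1
  have hq1 : ∫ x in Set.Ico (1:ℝ) b, q x = 1 := by
    rw [← conv]
    have h0 : (0:ℝ) ∉ Set.uIcc (1:ℝ) b := by
      rw [Set.uIcc_of_le hb.le]; intro h; exact absurd h.1 (by norm_num)
    have : ∀ x : ℝ, q x = (1 / x) / L := by intro x; rw [hq]; rw [div_div]
    simp only [this]
    rw [intervalIntegral.integral_div, integral_one_div h0]
    simp [hLdef, ne_of_gt hL]
    refine ⟨?_, ?_, ?_⟩ <;> linarith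
  have hlogq : ∀ x ∈ Set.Ico (1:ℝ) b, Real.log (q x) = -(Real.log x) - Real.log L := by
    intro x hx
    have hx0 : x ≠ 0 := ne_of_gt (lt_of_lt_of_le one_pos hx.1)
    rw [hq]
    simp only [one_div, Real.log_inv, Real.log_mul hx0 (ne_of_gt hL)]
    ring
  -- integrability of ρ * log q
  have hiq : IntegrableOn (fun x => ρ x * Real.log (q x)) (Set.Ico 1 b) := by
    have hi2n : IntegrableOn (fun x => -(ρ x * Real.log x) - Real.log L * ρ x)
        (Set.Ico 1 b) := hi2.neg.sub (hρint.const_mul (Real.log L))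
    apply IntegrableOn.congr_fun hi2n ?_ measurableSet_Ico
    intro x hx
    show -(ρ x * Real.log x) - Real.log L * ρ x = ρ x * Real.log (q x)
    rw [hlogq x hx]
    ring
  -- value of ∫ ρ log q
  have hIq : ∫ x in Set.Ico (1:ℝ) b, ρ x * Real.log (q x)
      = -(∫ x in Set.Ico (1:ℝ) b, ρ x * Real.log x) - Real.log L := by
    have : ∫ x in Set.Ico (1:ℝ) b, ρ x * Real.log (q x)
        = ∫ x in Set.Ico (1:ℝ) b, (-(ρ x * Real.log x) - Real.log L * ρ x) := by
      apply setIntegral_congr_fun measurableSet_Ico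
      intro x hx
      show ρ x * Real.log (q x) = -(ρ x * Real.log x) - Real.log L * ρ x
      rw [hlogq x hx]; ring
    have hi2n : IntegrableOn (fun x => -(ρ x * Real.log x)) (Set.Ico 1 b) := hi2.neg
    rw [this, integral_sub hi2n (hρint.const_mul (Real.log L)),
      integral_neg, integral_const_mul, hρ1, mul_one]
  -- the Gibbs function
  set F : ℝ → ℝ := fun x => (q x - ρ x) - (ρ x * Real.log (q x) - ρ x * Real.log (ρ x))
    with hF
  have hqpos : ∀ x ∈ Set.Ico (1:ℝ) b, 0 < q x := by
    intro x hx
    have hx0 : (0 : ℝ) < x := lt_of_lt_of_le one_pos hx.1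
    rw [hq]; positivity
  have hF_nonneg : ∀ x ∈ Set.Ico (1:ℝ) b, 0 ≤ F x := by
    intro x hx
    have hx0 : (0 : ℝ) < x := lt_of_lt_of_le one_pos hx.1
    have hq0 : 0 < q x := hqpos x hx
    rcases eq_or_lt_of_le (hρ x hx) with h0 | h0
    · simp [hF, ← h0, le_of_lt hq0]
    · have hrat : 0 < q x / ρ x := by positivity
      have hlog := Real.log_le_sub_one_of_pos hrat
      rw [Real.log_div (ne_of_gt hq0) (ne_of_gt h0)] at hlog
      have hmul := mul_le_mul_of_nonneg_left hlog (le_of_lt h0)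
      have hcancel : ρ x * (q x / ρ x) = q x := by field_simp
      simp only [hF]
      nlinarith [hmul, hcancel]
  have hF_int : IntegrableOn F (Set.Ico 1 b) :=
    (hq_int.sub hρint).sub (hiq.sub hi1)
  have hF_val : ∫ x in Set.Ico (1:ℝ) b, F x
      = (∫ x in Set.Ico (1:ℝ) b, ρ x * Real.log (ρ x))
        + (∫ x in Set.Ico (1:ℝ) b, ρ x * Real.log x) + Real.log L := by
    have hA : IntegrableOn (fun x => q x - ρ x) (Set.Ico 1 b) := hq_int.sub hρint
    have hB : IntegrableOn (fun x => ρ x * Real.log (q x) - ρ x * Real.log (ρ x))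
        (Set.Ico 1 b) := hiq.sub hi1
    simp only [hF]
    rw [integral_sub hA hB, integral_sub hq_int hρint, integral_sub hiq hi1, hρ1, hq1, hIq]
    ring
  have hF_int_nonneg : 0 ≤ ∫ x in Set.Ico (1:ℝ) b, F x :=
    setIntegral_nonneg measurableSet_Ico hF_nonneg
  have hconstraint' : ∫ x in Set.Ico (1:ℝ) b, ρ x * Real.log x ≤ (1 / 2) * L := by
    rw [← conv]; exact hconstraint
  refine ⟨?_, benford_entropy_integral b hb, ?_⟩
  · rw [conv]
    rw [hF_val] at hF_int_nonneg
    linarith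
  · intro heq
    rw [conv] at heq
    have hF_zero : ∫ x in Set.Ico (1:ℝ) b, F x = 0 := by
      rw [hF_val]; linarith [hconstraint', heq]
    have hF_nonneg_ae : 0 ≤ᵐ[MeasureTheory.volume.restrict (Set.Ico (1:ℝ) b)] F :=
      (ae_restrict_iff' measurableSet_Ico).mpr (Filter.Eventually.of_forall hF_nonneg)
    have hF_ae : F =ᵐ[MeasureTheory.volume.restrict (Set.Ico (1:ℝ) b)] 0 :=
      (integral_eq_zero_iff_of_nonneg_ae hF_nonneg_ae hF_int).mp hF_zero
    filter_upwards [hF_ae, ae_restrict_mem measurableSet_Ico] with x hFx hx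
    have hx0 : (0 : ℝ) < x := lt_of_lt_of_le one_pos hx.1
    have hq0 : 0 < q x := hqpos x hx
    simp only [Pi.zero_apply] at hFx
    rcases eq_or_lt_of_le (hρ x hx) with h0 | h0
    · exfalso
      have : F x = q x := by simp [hF, ← h0]
      rw [this] at hFx; exact absurd hFx (ne_of_gt hq0)
    · by_contra hne
      have hne' : q x / ρ x ≠ 1 := by
        intro h
        apply hne
        have := (div_eq_one_iff_eq (ne_of_gt h0)).mp h
        exact this.symm
      have hrat : 0 < q x / ρ x := by positivity
      have hlog := Real.log_lt_sub_one_of_pos hrat hne'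
      rw [Real.log_div (ne_of_gt hq0) (ne_of_gt h0)] at hlog
      have hmul := mul_lt_mul_of_pos_left hlog h0
      have hcancel : ρ x * (q x / ρ x) = q x := by field_simp
      have : 0 < F x := by simp only [hF]; nlinarith [hmul, hcancel]
      rw [hFx] at this; exact lt_irrefl 0 this
end

section
/- For any λ > 0, if X has the Newcomb–Benford distribution on [1, b) (cdf ln x / ln b), then the significand of λX in base b (i.e., λX reduced by the appropriate power of b into [1, b)) again has the Newcomb–Benford distribution. -/
open MeasureTheory

theorem benford_scale_invariance (b : ℝ) (hb : 1 < b)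
    (μ : Measure ℝ)
    (hμ : μ = (volume.restrict (Set.Ico 1 b)).withDensity
      (fun x => ENNReal.ofReal (1 / (x * Real.log b))))
    (l : ℝ) (hl : 0 < l) :
    Measure.map (fun x => l * x / (b : ℝ) ^ (⌊Real.logb b (l * x)⌋ : ℤ)) μ = μ := by
  have hb0 : (0:ℝ) < b := lt_trans one_pos hb
  have hbne : b ≠ 1 := hb.ne'
  have hlogb : 0 < Real.log b := Real.log_pos hb
  set ν : Measure ℝ := volume.restrict (Set.Ico 0 1) with hν
  set φ : ℝ → ℝ := fun t => b ^ t with hφ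
  have mφ : Measurable φ := by
    have hc : Continuous φ := by
      have : φ = fun t => Real.exp (Real.log b * t) := by
        funext t; show b ^ t = _; rw [Real.rpow_def_of_pos hb0]
      rw [this]
      exact Real.continuous_exp.comp (continuous_const.mul continuous_id)
    exact hc.measurable
  have mlogb : Measurable (Real.logb b) := by
    have : Real.logb b = fun x => Real.log x / Real.log b := rfl
    rw [this]
    exact Real.measurable_log.div_const _
  have mS : Measurable (fun x => l * x / (b : ℝ) ^ (⌊Real.logb b (l * x)⌋ : ℤ)) := by
    apply Measurable.div
    · exact measurable_const.mul measurable_id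
    · exact measurable_from_top.comp
        (Int.measurable_floor.comp (mlogb.comp (measurable_const.mul measurable_id)))
  have mg : ∀ c : ℝ, Measurable fun t : ℝ => Int.fract (t + c) := fun c =>
    measurable_fract.comp (measurable_id.add_const c)
  -- Step 1: map logb μ = uniform on [0,1)
  have hmap : Measure.map (Real.logb b) μ = ν := by
    have hs : MeasurableSet (Set.Ico (1:ℝ) b) := measurableSet_Ico
    have hder : ∀ x ∈ Set.Ico (1:ℝ) b, HasFDerivWithinAt (Real.logb b)
        ((1 : ℝ →L[ℝ] ℝ).smulRight (1 / (x * Real.log b))) (Set.Ico 1 b) x := by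
      intro x hx
      have hx0 : (0:ℝ) < x := lt_of_lt_of_le one_pos hx.1
      have h1 : HasDerivAt (Real.logb b) (1 / (x * Real.log b)) x := by
        have h2 := (Real.hasDerivAt_log hx0.ne').div_const (Real.log b)
        have h3 : Real.logb b = fun x => Real.log x / Real.log b := rfl
        rw [h3]
        rw [show 1 / (x * Real.log b) = x⁻¹ / Real.log b by ring]
        exact h2
      exact (hasDerivAt_iff_hasFDerivAt.mp h1).hasFDerivWithinAt
    have hinj : Set.InjOn (Real.logb b) (Set.Ico 1 b) :=
      (Real.logb_injOn_pos hb).mono (fun x hx => lt_of_lt_of_le one_pos hx.1)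
    have himg : Real.logb b '' Set.Ico 1 b = Set.Ico 0 1 := by
      ext y
      constructor
      · rintro ⟨x, hx, rfl⟩
        refine ⟨Real.logb_nonneg hb hx.1, ?_⟩
        calc Real.logb b x < Real.logb b b :=
              Real.logb_lt_logb hb (lt_of_lt_of_le one_pos hx.1) hx.2
          _ = 1 := Real.logb_self_eq_one hb
      · intro hy
        refine ⟨b ^ y, ⟨?_, ?_⟩, Real.logb_rpow hb0 hbne⟩
        · calc (1:ℝ) = b ^ (0:ℝ) := (Real.rpow_zero b).symm
            _ ≤ b ^ y := (Real.rpow_le_rpow_left_iff hb).mpr hy.1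
        · calc b ^ y < b ^ (1:ℝ) := (Real.rpow_lt_rpow_left_iff hb).mpr hy.2
            _ = b := Real.rpow_one b
    have hjac := map_withDensity_abs_det_fderiv_eq_addHaar volume hs.nullMeasurableSet hder hinj
    rw [himg] at hjac
    rw [hμ, hν, ← hjac]
    congr 1
    apply withDensity_congr_ae
    filter_upwards [ae_restrict_mem hs] with x hx
    have hx0 : (0:ℝ) < x := lt_of_lt_of_le one_pos hx.1
    rw [ContinuousLinearMap.smulRight_one_eq_toSpanSingleton, ContinuousLinearMap.det_toSpanSingleton, abs_of_pos (one_div_pos.mpr (mul_pos hx0 hlogb))]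
  -- Step 2: μ is the pushforward of ν under φ
  have hμeq : Measure.map φ ν = μ := by
    rw [← hmap, Measure.map_map mφ mlogb]
    have hae : φ ∘ Real.logb b =ᵐ[μ] id := by
      have hac : μ ≪ volume.restrict (Set.Ico 1 b) := by
        rw [hμ]; exact withDensity_absolutelyContinuous _ _
      filter_upwards [(ae_restrict_mem measurableSet_Ico).filter_mono hac.ae_le] with x hx
      exact Real.rpow_logb hb0 hbne (lt_of_lt_of_le one_pos hx.1)
    rw [Measure.map_congr hae, Measure.map_id]
  -- Step 3: fract translation preserves uniform measure on [0,1)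
  have fract_map : ∀ c : ℝ, Measure.map (fun t => Int.fract (t + c)) ν = ν := by
    intro c
    have hredc : (fun t : ℝ => Int.fract (t + c)) = fun t => Int.fract (t + Int.fract c) := by
      funext t
      have : t + c = t + Int.fract c + (⌊c⌋ : ℤ) := by
        rw [Int.fract]; ring
      rw [this, Int.fract_add_intCast]
    rw [hredc]
    set u : ℝ := Int.fract c with hu
    have hu0 : 0 ≤ u := Int.fract_nonneg c
    have hu1 : u < 1 := Int.fract_lt_one c
    have hsplit : ν = volume.restrict (Set.Ico 0 (1 - u)) +
        volume.restrict (Set.Ico (1 - u) 1) := by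
      rw [hν, ← Measure.restrict_union (Set.Ico_disjoint_Ico_same)
        measurableSet_Ico, Set.Ico_union_Ico_eq_Ico (by linarith) (by linarith)]
    have h1 : Measure.map (fun t => Int.fract (t + u)) (volume.restrict (Set.Ico 0 (1 - u)))
        = volume.restrict (Set.Ico u 1) := by
      have heq : Measure.map (fun t => Int.fract (t + u)) (volume.restrict (Set.Ico 0 (1 - u)))
          = Measure.map (fun t => t + u) (volume.restrict (Set.Ico 0 (1 - u))) := by
        apply Measure.map_congr
        filter_upwards [ae_restrict_mem measurableSet_Ico] with t ht
        exact Int.fract_eq_self.mpr ⟨by linarith [ht.1], by linarith [ht.2]⟩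
      rw [heq]
      have hpre : Set.Ico (0:ℝ) (1 - u) = (fun t => t + u) ⁻¹' Set.Ico u 1 := by
        ext t
        simp only [Set.mem_Ico, Set.mem_preimage]
        constructor <;> intro h <;> exact ⟨by linarith [h.1], by linarith [h.2]⟩
      rw [hpre, ← Measure.restrict_map (measurable_add_const u) measurableSet_Ico,
        (measurePreserving_add_right volume u).map_eq]
    have h2 : Measure.map (fun t => Int.fract (t + u)) (volume.restrict (Set.Ico (1 - u) 1))
        = volume.restrict (Set.Ico 0 u) := by
      have heq : Measure.map (fun t => Int.fract (t + u)) (volume.restrict (Set.Ico (1 - u) 1))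
          = Measure.map (fun t => t + (u - 1)) (volume.restrict (Set.Ico (1 - u) 1)) := by
        apply Measure.map_congr
        filter_upwards [ae_restrict_mem measurableSet_Ico] with t ht
        have : t + u = t + (u - 1) + ((1 : ℤ) : ℝ) := by push_cast; ring
        rw [this, Int.fract_add_intCast]
        exact Int.fract_eq_self.mpr ⟨by linarith [ht.1], by linarith [ht.2]⟩
      rw [heq]
      have hpre : Set.Ico (1 - u) (1:ℝ) = (fun t => t + (u - 1)) ⁻¹' Set.Ico 0 u := by
        ext t
        simp only [Set.mem_Ico, Set.mem_preimage]
        constructor <;> intro h <;> exact ⟨by linarith [h.1], by linarith [h.2]⟩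
      rw [hpre, ← Measure.restrict_map (measurable_add_const (u - 1)) measurableSet_Ico,
        (measurePreserving_add_right volume (u - 1)).map_eq]
    conv_lhs => rw [hsplit]
    rw [Measure.map_add _ _ (mg u), h1, h2, add_comm,
      ← Measure.restrict_union Set.Ico_disjoint_Ico_same measurableSet_Ico,
      Set.Ico_union_Ico_eq_Ico hu0 hu1.le]
  -- Step 4: the significand map conjugates to fract translation
  have key : (fun x => l * x / (b : ℝ) ^ (⌊Real.logb b (l * x)⌋ : ℤ)) ∘ φ
      = φ ∘ (fun t => Int.fract (t + Real.logb b l)) := by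
    funext t
    simp only [Function.comp_apply, hφ]
    have hlb : l * b ^ t = b ^ (Real.logb b l + t) := by
      rw [Real.rpow_add hb0, Real.rpow_logb hb0 hbne hl]
    rw [hlb, Real.logb_rpow hb0 hbne, ← Real.rpow_intCast, ← Real.rpow_sub hb0]
    congr 1
    rw [Int.self_sub_floor, add_comm]
  -- Conclusion
  calc Measure.map (fun x => l * x / (b : ℝ) ^ (⌊Real.logb b (l * x)⌋ : ℤ)) μ
      = Measure.map (fun x => l * x / (b : ℝ) ^ (⌊Real.logb b (l * x)⌋ : ℤ))
          (Measure.map φ ν) := by rw [hμeq]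
    _ = Measure.map ((fun x => l * x / (b : ℝ) ^ (⌊Real.logb b (l * x)⌋ : ℤ)) ∘ φ) ν :=
          Measure.map_map mS mφ
    _ = Measure.map (φ ∘ (fun t => Int.fract (t + Real.logb b l))) ν := by rw [key]
    _ = Measure.map φ (Measure.map (fun t => Int.fract (t + Real.logb b l)) ν) :=
          (Measure.map_map mφ (mg _)).symm
    _ = Measure.map φ ν := by rw [fract_map]
    _ = μ := hμeq
end
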